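/- Semidiscrete free energy dissipation: summing the cell entropy identities Δxᵢ dηᵢ/dt + Δxᵢ Hᵢ dρᵢ/dt + Gᵢ₊½ − Gᵢ₋½ = −uᵢ(γΔxᵢρᵢuᵢ + Δxᵢρᵢ Σⱼ Δxⱼρⱼ(uᵢ−uⱼ)ψᵢⱼ) over i (with telescoping boundary terms vanishing and Hᵢ = Vᵢ + ΣⱼΔxⱼWᵢⱼρⱼ with symmetric Wᵢⱼ = Wⱼᵢ), the discrete total energy E^Δ(t) = Σᵢ Δxᵢ(½ρᵢuᵢ² + Π(ρᵢ) + Vᵢρᵢ) + ½ΣᵢⱼΔxᵢΔxⱼWᵢⱼρᵢρⱼ satisfies dE^Δ/dt ≤ −γΣᵢΔxᵢρᵢuᵢ² − ½ΣᵢⱼΔxᵢΔxⱼρᵢρⱼ(uᵢ−uⱼ)²ψᵢⱼ. -/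

import Mathlib

/-- Semidiscrete free energy dissipation: summing the cell entropy identities over
the cells (with telescoping boundary entropy fluxes vanishing, symmetric `W` and
symmetric nonnegative `ψ`), the discrete total energy
`E^Δ(t) = Σᵢ Δxᵢ(½ρᵢuᵢ² + Π(ρᵢ) + Vᵢρᵢ) + ½ΣᵢⱼΔxᵢΔxⱼWᵢⱼρᵢρⱼ` satisfies
`dE^Δ/dt ≤ -γΣᵢΔxᵢρᵢuᵢ² - ½ΣᵢⱼΔxᵢΔxⱼρᵢρⱼ(uᵢ-uⱼ)²ψᵢⱼ`. -/
theorem stmt_17 (n : ℕ) (Δx V : Fin n → ℝ) (W ψ : Fin n → Fin n → ℝ) (γ : ℝ)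
    (Pif : ℝ → ℝ) (hPif : Differentiable ℝ Pif)
    (ρ u : ℝ → Fin n → ℝ) (G : ℝ → Fin (n+1) → ℝ)
    (hΔx : ∀ i, 0 < Δx i) (hγ : 0 ≤ γ)
    (hρnn : ∀ t i, 0 ≤ ρ t i)
    (hWsymm : ∀ i j, W i j = W j i)
    (hψsymm : ∀ i j, ψ i j = ψ j i) (hψpos : ∀ i j, 0 ≤ ψ i j)
    (hρd : ∀ i, Differentiable ℝ (fun t => ρ t i))
    (hud : ∀ i, Differentiable ℝ (fun t => u t i))
    -- no-flux boundaries for the numerical entropy flux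
    (hGb : ∀ t : ℝ, G t 0 = 0 ∧ G t (Fin.last n) = 0)
    -- cell entropy identities, with `Hᵢ = Vᵢ + Σⱼ Δxⱼ Wᵢⱼ ρⱼ`
    (hent : ∀ (t : ℝ) (i : Fin n),
      Δx i * deriv (fun s => Pif (ρ s i) + (1/2) * ρ s i * (u s i)^2) t
      + Δx i * (V i + ∑ j : Fin n, Δx j * W i j * ρ t j) * deriv (fun s => ρ s i) t
      + G t i.succ - G t i.castSucc
      = -(u t i) * (γ * Δx i * ρ t i * u t i
          + Δx i * ρ t i * ∑ j : Fin n, Δx j * ρ t j * (u t i - u t j) * ψ i j)) :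
    ∀ t : ℝ,
      deriv (fun s =>
        (∑ i : Fin n, Δx i * ((1/2) * ρ s i * (u s i)^2 + Pif (ρ s i) + V i * ρ s i))
        + (1/2) * ∑ i : Fin n, ∑ j : Fin n, Δx i * Δx j * W i j * ρ s i * ρ s j) t
      ≤ -(γ * ∑ i : Fin n, Δx i * ρ t i * (u t i)^2)
        - (1/2) * ∑ i : Fin n, ∑ j : Fin n,
            Δx i * Δx j * ρ t i * ρ t j * (u t i - u t j)^2 * ψ i j := by

  intro t
  classical
  -- pointwise derivatives
  have hρ : ∀ i, HasDerivAt (fun s => ρ s i) (deriv (fun s => ρ s i) t) t :=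
    fun i => ((hρd i) t).hasDerivAt
  have hu : ∀ i, HasDerivAt (fun s => u s i) (deriv (fun s => u s i) t) t :=
    fun i => ((hud i) t).hasDerivAt
  have hPi : ∀ i, HasDerivAt (fun s => Pif (ρ s i))
      (deriv Pif (ρ t i) * deriv (fun s => ρ s i) t) t :=
    fun i => ((hPif (ρ t i)).hasDerivAt).comp t (hρ i)
  have hkin : ∀ i, HasDerivAt (fun s => (1/2 : ℝ) * ρ s i * (u s i)^2)
      ((1/2) * deriv (fun s => ρ s i) t * (u t i)^2
        + ρ t i * u t i * deriv (fun s => u s i) t) t := by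
    intro i
    have h := (((hρ i).const_mul ((1:ℝ)/2)).mul ((hu i).pow 2))
    refine h.congr_deriv ?_
    simp only [Pi.pow_apply]
    push_cast
    ring
  -- derivative of the entropy density appearing in hent
  have hη : ∀ i, deriv (fun s => Pif (ρ s i) + (1/2) * ρ s i * (u s i)^2) t
      = deriv Pif (ρ t i) * deriv (fun s => ρ s i) t
        + ((1/2) * deriv (fun s => ρ s i) t * (u t i)^2
            + ρ t i * u t i * deriv (fun s => u s i) t) :=
    fun i => ((hPi i).add (hkin i)).deriv
  -- derivative of the total discrete energy
  have hterm1 : ∀ i : Fin n, HasDerivAt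
      (fun s => Δx i * ((1/2) * ρ s i * (u s i)^2 + Pif (ρ s i) + V i * ρ s i))
      (Δx i * (((1/2) * deriv (fun s => ρ s i) t * (u t i)^2
          + ρ t i * u t i * deriv (fun s => u s i) t)
        + deriv Pif (ρ t i) * deriv (fun s => ρ s i) t
        + V i * deriv (fun s => ρ s i) t)) t := by
    intro i
    exact (((hkin i).add (hPi i)).add ((hρ i).const_mul (V i))).const_mul (Δx i)
  have hterm2 : ∀ i j : Fin n, HasDerivAt
      (fun s => Δx i * Δx j * W i j * ρ s i * ρ s j)
      (Δx i * Δx j * W i j * (deriv (fun s => ρ s i) t * ρ t j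
        + ρ t i * deriv (fun s => ρ s j) t)) t := by
    intro i j
    have h := ((hρ i).const_mul (Δx i * Δx j * W i j)).mul (hρ j)
    refine h.congr_deriv ?_
    ring
  have hE : HasDerivAt (fun s =>
      (∑ i : Fin n, Δx i * ((1/2) * ρ s i * (u s i)^2 + Pif (ρ s i) + V i * ρ s i))
      + (1/2) * ∑ i : Fin n, ∑ j : Fin n, Δx i * Δx j * W i j * ρ s i * ρ s j)
      ((∑ i : Fin n, Δx i * (((1/2) * deriv (fun s => ρ s i) t * (u t i)^2
          + ρ t i * u t i * deriv (fun s => u s i) t)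
        + deriv Pif (ρ t i) * deriv (fun s => ρ s i) t
        + V i * deriv (fun s => ρ s i) t))
      + (1/2) * ∑ i : Fin n, ∑ j : Fin n,
          Δx i * Δx j * W i j * (deriv (fun s => ρ s i) t * ρ t j
            + ρ t i * deriv (fun s => ρ s j) t)) t := by
    refine HasDerivAt.add ?_ ?_
    · exact HasDerivAt.fun_sum fun i _ => hterm1 i
    · exact (HasDerivAt.fun_sum fun i _ => HasDerivAt.fun_sum fun j _ => hterm2 i j).const_mul (1/2)
  rw [hE.deriv]
  -- telescoping of the entropy fluxes
  have htel : ∑ i : Fin n, (G t i.succ - G t i.castSucc) = 0 := by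
    set g : ℕ → ℝ := fun k => if h : k < n + 1 then G t ⟨k, h⟩ else 0 with hg
    have e1 : ∀ i : Fin n, G t i.succ = g (i.val + 1) := by
      intro i
      simp only [hg]
      rw [dif_pos (Nat.succ_lt_succ i.isLt)]
      rfl
    have e2 : ∀ i : Fin n, G t i.castSucc = g i.val := by
      intro i
      simp only [hg]
      rw [dif_pos (lt_trans i.isLt (Nat.lt_succ_self n))]
      rfl
    have h1 : ∑ i : Fin n, (G t i.succ - G t i.castSucc)
        = ∑ k ∈ Finset.range n, (g (k+1) - g k) := by
      rw [← Fin.sum_univ_eq_sum_range (fun k => g (k+1) - g k) n]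
      exact Finset.sum_congr rfl fun i _ => by rw [e1 i, e2 i]
    rw [h1, Finset.sum_range_sub]
    have h2 : g n = 0 := by
      simp only [hg]
      rw [dif_pos (Nat.lt_succ_self n)]
      have hl : (⟨n, Nat.lt_succ_self n⟩ : Fin (n+1)) = Fin.last n := rfl
      rw [hl, (hGb t).2]
    have h3 : g 0 = 0 := by
      simp only [hg]
      rw [dif_pos (Nat.succ_pos n)]
      have hz : (⟨0, Nat.succ_pos n⟩ : Fin (n+1)) = 0 := rfl
      rw [hz, (hGb t).1]
    rw [h2, h3, sub_zero]
  -- summed cell entropy identities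
  have hsum : ∑ i : Fin n,
      (Δx i * (deriv Pif (ρ t i) * deriv (fun s => ρ s i) t
          + ((1/2) * deriv (fun s => ρ s i) t * (u t i)^2
              + ρ t i * u t i * deriv (fun s => u s i) t))
        + Δx i * (V i + ∑ j : Fin n, Δx j * W i j * ρ t j) * deriv (fun s => ρ s i) t)
      = ∑ i : Fin n, -(u t i) * (γ * Δx i * ρ t i * u t i
          + Δx i * ρ t i * ∑ j : Fin n, Δx j * ρ t j * (u t i - u t j) * ψ i j) := by
    have hterm : ∀ i : Fin n,
        (Δx i * (deriv Pif (ρ t i) * deriv (fun s => ρ s i) t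
            + ((1/2) * deriv (fun s => ρ s i) t * (u t i)^2
                + ρ t i * u t i * deriv (fun s => u s i) t))
          + Δx i * (V i + ∑ j : Fin n, Δx j * W i j * ρ t j) * deriv (fun s => ρ s i) t)
          + (G t i.succ - G t i.castSucc)
        = -(u t i) * (γ * Δx i * ρ t i * u t i
            + Δx i * ρ t i * ∑ j : Fin n, Δx j * ρ t j * (u t i - u t j) * ψ i j) := by
      intro i
      have h := hent t i
      rw [hη i] at h
      linarith [h]
    calc ∑ i : Fin n,
        (Δx i * (deriv Pif (ρ t i) * deriv (fun s => ρ s i) t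
            + ((1/2) * deriv (fun s => ρ s i) t * (u t i)^2
                + ρ t i * u t i * deriv (fun s => u s i) t))
          + Δx i * (V i + ∑ j : Fin n, Δx j * W i j * ρ t j) * deriv (fun s => ρ s i) t)
        = ∑ i : Fin n,
            ((Δx i * (deriv Pif (ρ t i) * deriv (fun s => ρ s i) t
                + ((1/2) * deriv (fun s => ρ s i) t * (u t i)^2
                    + ρ t i * u t i * deriv (fun s => u s i) t))
              + Δx i * (V i + ∑ j : Fin n, Δx j * W i j * ρ t j)
                  * deriv (fun s => ρ s i) t)
              + (G t i.succ - G t i.castSucc)) := by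
          conv_rhs => rw [Finset.sum_add_distrib]
          rw [htel, add_zero]
      _ = _ := Finset.sum_congr rfl fun i _ => hterm i
  -- symmetrization of the interaction-energy derivative
  have hW : (1/2 : ℝ) * ∑ i : Fin n, ∑ j : Fin n,
        Δx i * Δx j * W i j * (deriv (fun s => ρ s i) t * ρ t j
          + ρ t i * deriv (fun s => ρ s j) t)
      = ∑ i : Fin n, Δx i * (∑ j : Fin n, Δx j * W i j * ρ t j)
          * deriv (fun s => ρ s i) t := by
    have hswap : ∑ i : Fin n, ∑ j : Fin n,
          Δx i * Δx j * W i j * (ρ t i * deriv (fun s => ρ s j) t)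
        = ∑ i : Fin n, ∑ j : Fin n,
            Δx i * Δx j * W i j * (deriv (fun s => ρ s i) t * ρ t j) := by
      rw [Finset.sum_comm]
      exact Finset.sum_congr rfl fun i _ => Finset.sum_congr rfl fun j _ => by
        rw [hWsymm]; ring
    have hsplit : ∑ i : Fin n, ∑ j : Fin n,
          Δx i * Δx j * W i j * (deriv (fun s => ρ s i) t * ρ t j
            + ρ t i * deriv (fun s => ρ s j) t)
        = (∑ i : Fin n, ∑ j : Fin n,
            Δx i * Δx j * W i j * (deriv (fun s => ρ s i) t * ρ t j))
          + ∑ i : Fin n, ∑ j : Fin n,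
              Δx i * Δx j * W i j * (ρ t i * deriv (fun s => ρ s j) t) := by
      rw [← Finset.sum_add_distrib]
      exact Finset.sum_congr rfl fun i _ => by
        rw [← Finset.sum_add_distrib]
        exact Finset.sum_congr rfl fun j _ => by ring
    have hx : ∀ i : Fin n,
        Δx i * (∑ j : Fin n, Δx j * W i j * ρ t j) * deriv (fun s => ρ s i) t
        = ∑ j : Fin n, Δx i * Δx j * W i j * (deriv (fun s => ρ s i) t * ρ t j) := by
      intro i
      rw [Finset.mul_sum, Finset.sum_mul]
      exact Finset.sum_congr rfl fun j _ => by ring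
    rw [hsplit, hswap]
    rw [show ∀ x : ℝ, (1/2 : ℝ) * (x + x) = x from fun x => by ring]
    exact (Finset.sum_congr rfl fun i _ => hx i).symm
  -- symmetrization of the friction term
  have hswapS : ∑ i : Fin n, ∑ j : Fin n,
        Δx i * Δx j * ρ t i * ρ t j * u t i * (u t i - u t j) * ψ i j
      = ∑ i : Fin n, ∑ j : Fin n,
          Δx i * Δx j * ρ t i * ρ t j * (-(u t j)) * (u t i - u t j) * ψ i j := by
    rw [Finset.sum_comm]
    exact Finset.sum_congr rfl fun i _ => Finset.sum_congr rfl fun j _ => by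
      rw [hψsymm]; ring
  have hSsym : ∑ i : Fin n, ∑ j : Fin n,
        Δx i * Δx j * ρ t i * ρ t j * u t i * (u t i - u t j) * ψ i j
      = (1/2) * ∑ i : Fin n, ∑ j : Fin n,
          Δx i * Δx j * ρ t i * ρ t j * (u t i - u t j)^2 * ψ i j := by
    have h2 : (∑ i : Fin n, ∑ j : Fin n,
          Δx i * Δx j * ρ t i * ρ t j * u t i * (u t i - u t j) * ψ i j)
        + ∑ i : Fin n, ∑ j : Fin n,
            Δx i * Δx j * ρ t i * ρ t j * u t i * (u t i - u t j) * ψ i j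
        = ∑ i : Fin n, ∑ j : Fin n,
            Δx i * Δx j * ρ t i * ρ t j * (u t i - u t j)^2 * ψ i j := by
      nth_rewrite 2 [hswapS]
      rw [← Finset.sum_add_distrib]
      exact Finset.sum_congr rfl fun i _ => by
        rw [← Finset.sum_add_distrib]
        exact Finset.sum_congr rfl fun j _ => by ring
    linarith [h2]
  -- expand the right-hand side of the entropy identities
  have hexp : ∑ i : Fin n, -(u t i) * (γ * Δx i * ρ t i * u t i
        + Δx i * ρ t i * ∑ j : Fin n, Δx j * ρ t j * (u t i - u t j) * ψ i j)
      = -(γ * ∑ i : Fin n, Δx i * ρ t i * (u t i)^2)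
        - ∑ i : Fin n, ∑ j : Fin n,
            Δx i * Δx j * ρ t i * ρ t j * u t i * (u t i - u t j) * ψ i j := by
    have hterm : ∀ i : Fin n, -(u t i) * (γ * Δx i * ρ t i * u t i
          + Δx i * ρ t i * ∑ j : Fin n, Δx j * ρ t j * (u t i - u t j) * ψ i j)
        = -(γ * (Δx i * ρ t i * (u t i)^2))
          - ∑ j : Fin n, Δx i * Δx j * ρ t i * ρ t j * u t i * (u t i - u t j) * ψ i j := by
      intro i
      have h1 : Δx i * ρ t i * u t i * ∑ j : Fin n, Δx j * ρ t j * (u t i - u t j) * ψ i j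
          = ∑ j : Fin n, Δx i * Δx j * ρ t i * ρ t j * u t i * (u t i - u t j) * ψ i j := by
        rw [Finset.mul_sum]
        exact Finset.sum_congr rfl fun j _ => by ring
      calc -(u t i) * (γ * Δx i * ρ t i * u t i
            + Δx i * ρ t i * ∑ j : Fin n, Δx j * ρ t j * (u t i - u t j) * ψ i j)
          = -(γ * (Δx i * ρ t i * (u t i)^2))
            - Δx i * ρ t i * u t i
                * ∑ j : Fin n, Δx j * ρ t j * (u t i - u t j) * ψ i j := by ring
        _ = _ := by rw [h1]
    rw [Finset.sum_congr rfl fun i _ => hterm i, Finset.sum_sub_distrib]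
    congr 1
    rw [Finset.mul_sum, ← Finset.sum_neg_distrib]
  -- put everything together
  refine le_of_eq ?_
  rw [hW]
  calc (∑ i : Fin n, Δx i * (((1/2) * deriv (fun s => ρ s i) t * (u t i)^2
          + ρ t i * u t i * deriv (fun s => u s i) t)
        + deriv Pif (ρ t i) * deriv (fun s => ρ s i) t
        + V i * deriv (fun s => ρ s i) t))
      + ∑ i : Fin n, Δx i * (∑ j : Fin n, Δx j * W i j * ρ t j)
          * deriv (fun s => ρ s i) t
      = ∑ i : Fin n,
          (Δx i * (deriv Pif (ρ t i) * deriv (fun s => ρ s i) t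
              + ((1/2) * deriv (fun s => ρ s i) t * (u t i)^2
                  + ρ t i * u t i * deriv (fun s => u s i) t))
            + Δx i * (V i + ∑ j : Fin n, Δx j * W i j * ρ t j)
                * deriv (fun s => ρ s i) t) := by
        rw [← Finset.sum_add_distrib]
        exact Finset.sum_congr rfl fun i _ => by ring
    _ = ∑ i : Fin n, -(u t i) * (γ * Δx i * ρ t i * u t i
          + Δx i * ρ t i * ∑ j : Fin n, Δx j * ρ t j * (u t i - u t j) * ψ i j) := hsum
    _ = -(γ * ∑ i : Fin n, Δx i * ρ t i * (u t i)^2)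
        - ∑ i : Fin n, ∑ j : Fin n,
            Δx i * Δx j * ρ t i * ρ t j * u t i * (u t i - u t j) * ψ i j := hexp
    _ = _ := by rw [hSsym]
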